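/- arXiv:1610.00450 — 3 statements merged into one kernel-verified Lean document; each statement's English description precedes it below -/
import Mathlib

section
/- Let G be a prefix-recognizable graph over an alphabet A in which every vertex has finite out-degree, with vertex set a regular language V ⊆ C* and each edge relation a finite union of relations of the form U·(V×W) with U,V,W regular and all W finite. Then for every infinite path u_0, u_1, u_2, … in G there exists a constant K ≥ 0 such that the out-degree of u_i is at most K·(i+1) for all i ≥ 0. -/
/-- In a prefix-recognizable graph (vertex set a regular language `Vert ⊆ C*`,
each edge relation a finite union of relations `U·(V×W)` with `U, V, W`
regular and, since out-degrees are finite, all `W` finite), the out-degree of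
the `i`-th vertex of any infinite path is bounded by `K·(i+1)` for some
constant `K`. -/
theorem prefixRecognizable_outDegree_linear_on_paths
    {C A : Type} [Fintype A]
    (Vert : Language C) (hVert : Vert.IsRegular)
    (n : A → ℕ)
    (U Vl W : (a : A) → Fin (n a) → Language C)
    (hU : ∀ a i, (U a i).IsRegular)
    (hVl : ∀ a i, (Vl a i).IsRegular)
    (hWreg : ∀ a i, (W a i).IsRegular)
    (hWfin : ∀ a i, (W a i : Set (List C)).Finite)
    -- the edge relation of the graph
    (E : A → List C → List C → Prop)
    (hE : ∀ a x y, E a x y ↔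
      x ∈ Vert ∧ y ∈ Vert ∧
      ∃ i : Fin (n a), ∃ u v w : List C,
        u ∈ U a i ∧ v ∈ Vl a i ∧ w ∈ W a i ∧ x = u ++ v ∧ y = u ++ w)
    -- every vertex has finite out-degree
    (hfin : ∀ x : List C, {p : A × List C | E p.1 x p.2}.Finite)
    -- an infinite path in the graph
    (u : ℕ → List C) (hpath : ∀ i : ℕ, ∃ a : A, E a (u i) (u (i + 1))) :
    ∃ K : ℕ, ∀ i : ℕ, {p : A × List C | E p.1 (u i) p.2}.ncard ≤ K * (i + 1) := by
  classical
  -- the (finite) union of all the `W a i`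
  set WW : Set (List C) := ⋃ a : A, ⋃ i : Fin (n a), (W a i : Set (List C)) with hWWdef
  have hWWfin : WW.Finite := Set.finite_iUnion fun a => Set.finite_iUnion fun i => hWfin a i
  set Wfin : Finset (List C) := hWWfin.toFinset with hWfindef
  have hmemW : ∀ a i (w : List C), w ∈ W a i → w ∈ Wfin := by
    intro a i w hw
    simp only [hWfindef, Set.Finite.mem_toFinset, hWWdef, Set.mem_iUnion]
    exact ⟨a, Set.mem_iUnion.mpr ⟨i, hw⟩⟩
  set M : ℕ := Wfin.sup List.length with hMdef
  have hlenW : ∀ w ∈ Wfin, w.length ≤ M := fun w hw => Finset.le_sup hw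
  set K0 : ℕ := Fintype.card A * Wfin.card with hK0def
  -- degree bound : out-degree of `x` is at most `K0 * (x.length + 1)`
  have deg : ∀ x : List C,
      {p : A × List C | E p.1 x p.2}.ncard ≤ K0 * (x.length + 1) := by
    intro x
    set T : Finset (A × (ℕ × List C)) :=
      Finset.univ ×ˢ (Finset.range (x.length + 1) ×ˢ Wfin) with hTdef
    set g : A × (ℕ × List C) → A × List C :=
      fun q => (q.1, x.take q.2.1 ++ q.2.2) with hgdef
    have hsub : {p : A × List C | E p.1 x p.2} ⊆ g '' ↑T := by
      rintro ⟨a, y⟩ hp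
      obtain ⟨-, -, i, uu, vv, ww, hu, hv, hw, hx, hy⟩ := (hE a x y).mp hp
      refine ⟨(a, uu.length, ww), ?_, ?_⟩
      · simp only [hTdef, Finset.coe_product, Set.mem_prod, Finset.mem_coe,
          Finset.mem_univ, Finset.mem_range, true_and]
        constructor
        · have : x.length = uu.length + vv.length := by simp [hx]
          omega
        · exact hmemW a i ww hw
      · show (a, x.take uu.length ++ ww) = (a, y)
        rw [hx, List.take_left, ← hy]
    calc {p : A × List C | E p.1 x p.2}.ncard
        ≤ (g '' ↑T).ncard := Set.ncard_le_ncard hsub ((T.finite_toSet).image g)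
      _ ≤ (↑T : Set (A × (ℕ × List C))).ncard :=
          Set.ncard_image_le T.finite_toSet
      _ = T.card := Set.ncard_coe_finset T
      _ = Fintype.card A * ((x.length + 1) * Wfin.card) := by
          rw [hTdef, Finset.card_product, Finset.card_product, Finset.card_range,
            Finset.card_univ]
      _ = K0 * (x.length + 1) := by rw [hK0def]; ring
  -- length bound along the path
  have len : ∀ i : ℕ, (u i).length ≤ (u 0).length + M * i := by
    intro i
    induction i with
    | zero => simp
    | succ i ih =>
        obtain ⟨a, ha⟩ := hpath i
        obtain ⟨-, -, j, uu, vv, ww, hu, hv, hw, hx, hy⟩ := (hE a (u i) (u (i + 1))).mp ha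
        have h1 : (u (i + 1)).length = uu.length + ww.length := by simp [hy]
        have h2 : (u i).length = uu.length + vv.length := by simp [hx]
        have h3 : ww.length ≤ M := hlenW ww (hmemW a j ww hw)
        have : M * (i + 1) = M * i + M := by ring
        omega
  refine ⟨K0 * ((u 0).length + M + 1), fun i => ?_⟩
  calc {p : A × List C | E p.1 (u i) p.2}.ncard
      ≤ K0 * ((u i).length + 1) := deg (u i)
    _ ≤ K0 * ((u 0).length + M * i + 1) := by
        have := len i; exact Nat.mul_le_mul_left _ (by omega)
    _ ≤ K0 * (((u 0).length + M + 1) * (i + 1)) := by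
        refine Nat.mul_le_mul_left _ ?_
        have e : ((u 0).length + M + 1) * (i + 1)
            = (u 0).length * i + M * i + i + ((u 0).length + M + 1) := by ring
        linarith [Nat.zero_le ((u 0).length * i), Nat.zero_le i]
    _ = K0 * ((u 0).length + M + 1) * (i + 1) := (mul_assoc _ _ _).symm
end

section
/- Contraction commutes with unfolding under a uniqueness condition: let H be a graph labelled in A ⊎ B with root r such that for every a ∈ A and any two vertices u, v there is at most one path from u to v labelled by a word in B*a. Then the B-contraction of the unfolding of H from r is isomorphic to the unfolding from r of the B-contraction of H. -/
/-- A rooted edge-labelled graph with labels in `L`. -/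
structure LGraph (L : Type) where
  V : Type
  root : V
  edge : V → L → V → Prop

namespace LGraph

variable {L A B : Type}

/-- Reachability along edges. -/
def Reaches (G : LGraph L) (u v : G.V) : Prop :=
  Relation.ReflTransGen (fun x y => ∃ l, G.edge x l y) u v

/-- The vertices reachable from the root. -/
def Rt (G : LGraph L) : Type := {v : G.V // G.Reaches G.root v}

/-- An isomorphism between (the reachable parts of) two rooted labelled
graphs: a bijection on vertices preserving the root, the edges and the
labels. -/
structure Isomorphism (G H : LGraph L) where
  toEquiv : G.Rt ≃ H.Rt
  map_root : (toEquiv ⟨G.root, Relation.ReflTransGen.refl⟩).1 = H.root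
  map_edge : ∀ (u v : G.Rt) (l : L),
    G.edge u.1 l v.1 ↔ H.edge (toEquiv u).1 l (toEquiv v).1

def Isomorphic (G H : LGraph L) : Prop := Nonempty (G.Isomorphism H)

/-- Bisimilarity of rooted labelled graphs. -/
def Bisimilar (G H : LGraph L) : Prop :=
  ∃ R : G.V → H.V → Prop,
    R G.root H.root ∧
    (∀ u u', R u u' → ∀ l v, G.edge u l v → ∃ v', H.edge u' l v' ∧ R v v') ∧
    (∀ u u', R u u' → ∀ l v', H.edge u' l v' → ∃ v, G.edge u l v ∧ R v v')

/-- Paths labelled only by letters of `B`. -/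
def BStar (G : LGraph (A ⊕ B)) : G.V → G.V → Prop :=
  Relation.ReflTransGen (fun x y => ∃ b : B, G.edge x (Sum.inr b) y)

/-- The `B`-contraction of a graph labelled in `A ⊕ B`: it has an `a`-labelled
edge from `u` to `v` whenever there is a path from `u` to `v` labelled by a
word in `B*a`; its (reachable) vertices are the root together with the
targets of `A`-labelled edges. -/
def contraction (G : LGraph (A ⊕ B)) : LGraph A where
  V := G.V
  root := G.root
  edge u a v := ∃ w, G.BStar u w ∧ G.edge w (Sum.inl a) v

/-- The state reached at the end of a path encoded as a list of
(label, vertex) steps. -/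
def endV (G : LGraph L) (p : List (L × G.V)) : G.V :=
  p.foldl (fun _ step => step.2) G.root

/-- The unfolding of `G` from its root: the tree of finite paths from the
root, with an `l`-labelled edge from `π` to `π'` when `π'` extends `π` by one
`l`-labelled edge. -/
def unfold (G : LGraph L) : LGraph L where
  V := List (L × G.V)
  root := []
  edge p l q := ∃ v : G.V, q = p ++ [(l, v)] ∧ G.edge (G.endV p) l v

/-- `G.IsPathFrom u p` : the list of steps `p` is a path in `G` starting at
`u`. -/
def IsPathFrom (G : LGraph L) : G.V → List (L × G.V) → Prop
  | _, [] => True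
  | u, s :: rest => G.edge u s.1 s.2 ∧ G.IsPathFrom s.2 rest

/-- `G.PathBA a u v p` : `p` is a path from `u` to `v` whose label word lies
in `B*a`. -/
def PathBA (G : LGraph (A ⊕ B)) (a : A) (u v : G.V)
    (p : List ((A ⊕ B) × G.V)) : Prop :=
  G.IsPathFrom u p ∧
  ∃ q, p = q ++ [(Sum.inl a, v)] ∧ ∀ s ∈ q, ∃ b : B, s.1 = Sum.inr b

end LGraph

open LGraph

namespace CUAux

variable {L A B : Type}

/-- End of a path starting at `u`. -/
def endFrom {V : Type} (u : V) (l : List (L × V)) : V :=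
  l.foldl (fun _ s => s.2) u

theorem endFrom_append {V : Type} (u : V) (xs ys : List (L × V)) :
    endFrom u (xs ++ ys) = endFrom (endFrom u xs) ys :=
  List.foldl_append ..

theorem endFrom_concat {V : Type} (u : V) (xs : List (L × V)) (s : L × V) :
    endFrom u (xs ++ [s]) = s.2 := by
  rw [endFrom_append]; rfl

theorem endV_eq (G : LGraph L) (l : List (L × G.V)) : G.endV l = endFrom G.root l := rfl

theorem endFrom_cons {V : Type} (u : V) (s : L × V) (l : List (L × V)) :
    endFrom u (s :: l) = endFrom s.2 l := rfl

theorem isPathFrom_append (G : LGraph L) (u : G.V) (xs ys : List (L × G.V)) :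
    G.IsPathFrom u (xs ++ ys) ↔ G.IsPathFrom u xs ∧ G.IsPathFrom (endFrom u xs) ys := by
  induction xs generalizing u with
  | nil => simp [IsPathFrom, endFrom]
  | cons s xs ih =>
    simp only [List.cons_append, IsPathFrom, List.append_eq, ih s.2, and_assoc, endFrom_cons]

/-- Contraction of a path word: keep only the `A`-labelled steps. -/
def contr {V : Type} : List ((A ⊕ B) × V) → List (A × V) :=
  List.filterMap fun s => Sum.elim (fun a => some (a, s.2)) (fun _ => none) s.1

theorem contr_append {V : Type} (p q : List ((A ⊕ B) × V)) :
    contr (p ++ q) = contr p ++ contr q :=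
  List.filterMap_append ..

theorem contr_inr {V : Type} (q : List ((A ⊕ B) × V))
    (h : ∀ s ∈ q, ∃ b : B, s.1 = Sum.inr b) : contr q = [] := by
  rw [contr, List.filterMap_eq_nil_iff]
  intro s hs
  obtain ⟨b, hb⟩ := h s hs
  rw [hb]; rfl

theorem contr_block {H : LGraph (A ⊕ B)} {a : A} {u v : H.V}
    {p : List ((A ⊕ B) × H.V)} (h : H.PathBA a u v p) : contr p = [(a, v)] := by
  obtain ⟨_, q, rfl, hq⟩ := h
  rw [contr_append, contr_inr q hq]; rfl

/-- Concatenations of `B*a`-blocks starting at `u`. -/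
inductive Blocks (H : LGraph (A ⊕ B)) : H.V → List ((A ⊕ B) × H.V) → Prop
  | nil (u : H.V) : Blocks H u []
  | cons {a : A} {u v : H.V} {r p : List ((A ⊕ B) × H.V)} :
      H.PathBA a u v r → Blocks H v p → Blocks H u (r ++ p)

theorem pathBA_endFrom {H : LGraph (A ⊕ B)} {a : A} {u v : H.V}
    {r : List ((A ⊕ B) × H.V)} (h : H.PathBA a u v r) (w : H.V) : endFrom w r = v := by
  obtain ⟨_, q, rfl, _⟩ := h
  exact endFrom_concat w q _

theorem blocks_inj {H : LGraph (A ⊕ B)}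
    (huniq : ∀ (a : A) (u v : H.V) (p q : List ((A ⊕ B) × H.V)),
      H.PathBA a u v p → H.PathBA a u v q → p = q)
    {u : H.V} {p q : List ((A ⊕ B) × H.V)}
    (hp : Blocks H u p) (hq : Blocks H u q) (h : contr p = contr q) : p = q := by
  induction hp generalizing q with
  | nil u =>
    cases hq with
    | nil => rfl
    | cons hr hb =>
      rw [contr_append, contr_block hr] at h
      simp [contr] at h
  | cons hr hb ih =>
    cases hq with
    | nil =>
      rw [contr_append, contr_block hr] at h
      simp [contr] at h
    | cons hr' hb' =>
      rename_i a u v r p a' v' r' p'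
      rw [contr_append, contr_block hr, contr_append, contr_block hr'] at h
      obtain ⟨⟨rfl, rfl⟩, h2⟩ : ((a = a' ∧ v = v') ∧ contr p = contr p') := by
        simpa using h
      obtain rfl := huniq a u v r r' hr hr'
      rw [ih hb' h2]

theorem blocks_endFrom_contr {H : LGraph (A ⊕ B)} {u : H.V}
    {p : List ((A ⊕ B) × H.V)} (h : Blocks H u p) :
    ∀ w : H.V, endFrom w (contr p) = endFrom w p := by
  induction h with
  | nil u => intro w; rfl
  | cons hr hb ih =>
    intro w
    rw [contr_append, contr_block hr, endFrom_append w, endFrom_append w,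
      pathBA_endFrom hr w]
    exact ih _

theorem blocks_append {H : LGraph (A ⊕ B)} {u : H.V} {p : List ((A ⊕ B) × H.V)}
    {a : A} {v : H.V} {blk : List ((A ⊕ B) × H.V)}
    (hb : Blocks H u p) (hblk : H.PathBA a (endFrom u p) v blk) :
    Blocks H u (p ++ blk) := by
  induction hb with
  | nil u =>
    simpa using Blocks.cons (u := u) (p := []) hblk (Blocks.nil v)
  | cons hr hb ih =>
    rename_i a' u' v' r p'
    rw [endFrom_append, pathBA_endFrom hr] at hblk
    rw [List.append_assoc]
    exact Blocks.cons hr (ih hblk)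

theorem isPathFrom_bstar {H : LGraph (A ⊕ B)} :
    ∀ (r : List ((A ⊕ B) × H.V)) (u : H.V), H.IsPathFrom u r →
      (∀ s ∈ r, ∃ b : B, s.1 = Sum.inr b) → H.BStar u (endFrom u r) := by
  intro r
  induction r with
  | nil => intro u _ _; exact Relation.ReflTransGen.refl
  | cons s r ih =>
    intro u hpath hlab
    obtain ⟨he, hrest⟩ := hpath
    obtain ⟨b, hb⟩ := hlab s (by simp)
    rw [endFrom_cons]
    refine Relation.ReflTransGen.head ⟨b, ?_⟩ (ih s.2 hrest fun t ht => hlab t (by simp [ht]))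
    rwa [hb] at he

theorem bstar_exists {H : LGraph (A ⊕ B)} {u w : H.V} (h : H.BStar u w) :
    ∃ r, H.IsPathFrom u r ∧ (∀ s ∈ r, ∃ b : B, s.1 = Sum.inr b) ∧ endFrom u r = w := by
  induction h with
  | refl => exact ⟨[], trivial, by simp, rfl⟩
  | @tail x y _ hstep ih =>
    obtain ⟨r, hpath, hlab, hend⟩ := ih
    obtain ⟨b, he⟩ := hstep
    refine ⟨r ++ [(Sum.inr b, y)], ?_, ?_, endFrom_concat u r _⟩
    · rw [isPathFrom_append, hend]
      exact ⟨hpath, he, trivial⟩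
    · intro s hs
      rcases List.mem_append.mp hs with hs | hs
      · exact hlab s hs
      · simp at hs; subst hs; exact ⟨b, rfl⟩

theorem pathBA_edge {H : LGraph (A ⊕ B)} {a : A} {u v : H.V}
    {blk : List ((A ⊕ B) × H.V)} (h : H.PathBA a u v blk) :
    (H.contraction).edge u a v := by
  obtain ⟨hpath, q, rfl, hq⟩ := h
  rw [isPathFrom_append] at hpath
  exact ⟨endFrom u q, isPathFrom_bstar q u hpath.1 hq, hpath.2.1⟩

theorem edge_pathBA {H : LGraph (A ⊕ B)} {a : A} {u v : H.V}
    (h : (H.contraction).edge u a v) : ∃ blk, H.PathBA a u v blk := by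
  obtain ⟨w, hw, he⟩ := h
  obtain ⟨r, hpath, hlab, hend⟩ := bstar_exists hw
  refine ⟨r ++ [(Sum.inl a, v)], ⟨?_, r, rfl, hlab⟩⟩
  rw [isPathFrom_append, hend]
  exact ⟨hpath, he, trivial⟩

theorem blocks_path {H : LGraph (A ⊕ B)} {u : H.V} {p : List ((A ⊕ B) × H.V)}
    (h : Blocks H u p) : (H.contraction).IsPathFrom u (contr p) := by
  induction h with
  | nil u => trivial
  | cons hr hb ih =>
    erw [contr_append, contr_block hr]
    exact ⟨pathBA_edge hr, ih⟩

theorem blocks_surj {H : LGraph (A ⊕ B)} {u : H.V} {m : List (A × H.V)}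
    (hm : (H.contraction).IsPathFrom u m) :
    ∃ p, Blocks H u p ∧ contr p = m := by
  induction m generalizing u with
  | nil => exact ⟨[], Blocks.nil u, rfl⟩
  | cons s m ih =>
    obtain ⟨he, hrest⟩ := hm
    obtain ⟨blk, hblk⟩ := edge_pathBA he
    obtain ⟨p, hb, hc⟩ := ih hrest
    exact ⟨blk ++ p, Blocks.cons hblk hb, by
      rw [contr_append, contr_block hblk, hc]; rfl⟩

theorem reaches_unfold (G : LGraph L) (q : List (L × G.V)) :
    (G.unfold).Reaches (G.unfold).root q ↔ G.IsPathFrom G.root q := by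
  constructor
  · intro h
    induction h with
    | refl => trivial
    | tail _ hstep ih =>
      obtain ⟨l, v, rfl, he⟩ := hstep
      rw [isPathFrom_append]
      exact ⟨ih, he, trivial⟩
  · intro h
    induction q using List.reverseRecOn with
    | nil => exact Relation.ReflTransGen.refl
    | append_singleton q s ih =>
      rw [isPathFrom_append] at h
      refine Relation.ReflTransGen.tail (ih h.1) ⟨s.1, s.2, ?_, h.2.1⟩
      rfl

theorem unfold_bstar {H : LGraph (A ⊕ B)} (p w : List ((A ⊕ B) × H.V)) :
    (H.unfold).BStar p w ↔
      ∃ r, w = p ++ r ∧ H.IsPathFrom (H.endV p) r ∧ ∀ s ∈ r, ∃ b : B, s.1 = Sum.inr b := by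
  constructor
  · intro h
    induction h with
    | refl => exact ⟨[], by simp, trivial, by simp⟩
    | tail _ hstep ih =>
      obtain ⟨r, rfl, hpath, hlab⟩ := ih
      obtain ⟨b, v, rfl, he⟩ := hstep
      refine ⟨r ++ [(Sum.inr b, v)], by simp, ?_, ?_⟩
      · rw [isPathFrom_append]
        refine ⟨hpath, ?_, trivial⟩
        rwa [show endFrom (H.endV p) r = H.endV (p ++ r) from (endFrom_append ..).symm]
      · intro s hs
        rcases List.mem_append.mp hs with hs | hs
        · exact hlab s hs
        · simp at hs; subst hs; exact ⟨b, rfl⟩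
  · rintro ⟨r, rfl, hpath, hlab⟩
    revert hpath hlab
    induction r generalizing p with
    | nil =>
      intro _ _
      rw [List.append_nil]; exact Relation.ReflTransGen.refl
    | cons s r ih =>
      rintro ⟨he, hrest⟩ hlab
      obtain ⟨b, hb⟩ := hlab s (by simp)
      refine Relation.ReflTransGen.head (b := p ++ [s])
        ⟨b, s.2, by rw [← hb], by rw [← hb]; exact he⟩ ?_
      have hend : H.endV (p ++ [s]) = s.2 := endFrom_concat H.root p s
      have := ih (p := p ++ [s]) (by rwa [hend]) (fun t ht => hlab t (by simp [ht]))
      rw [List.append_assoc] at this; exact this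

theorem edge_c1 {H : LGraph (A ⊕ B)} (p q : List ((A ⊕ B) × H.V)) (a : A) :
    ((H.unfold).contraction).edge p a q ↔
      ∃ (v : H.V) (blk : List ((A ⊕ B) × H.V)),
        q = p ++ blk ∧ H.PathBA a (H.endV p) v blk := by
  constructor
  · rintro ⟨w, hw, v, rfl, he⟩
    obtain ⟨r, rfl, hpath, hlab⟩ := (unfold_bstar p _).mp hw
    refine ⟨v, r ++ [(Sum.inl a, v)], by simp, ⟨?_, r, rfl, hlab⟩⟩
    rw [isPathFrom_append]
    refine ⟨hpath, ?_, trivial⟩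
    rwa [show endFrom (H.endV p) r = H.endV (p ++ r) from (endFrom_append ..).symm]
  · rintro ⟨v, blk, rfl, ⟨hpath, r, rfl, hlab⟩⟩
    rw [isPathFrom_append] at hpath
    refine ⟨p ++ r, (unfold_bstar p _).mpr ⟨r, rfl, hpath.1, hlab⟩, v, by simp, ?_⟩
    rw [show H.endV (p ++ r) = endFrom (H.endV p) r from endFrom_append ..]
    exact hpath.2.1

theorem blocks_reaches {H : LGraph (A ⊕ B)} {u : H.V} {p : List ((A ⊕ B) × H.V)}
    (h : Blocks H u p) :
    ∀ p0 : List ((A ⊕ B) × H.V), H.endV p0 = u →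
      ((H.unfold).contraction).Reaches p0 (p0 ++ p) := by
  induction h with
  | nil u =>
    intro p0 _
    rw [List.append_nil]; exact Relation.ReflTransGen.refl
  | cons hr hb ih =>
    rename_i a u v r p'
    intro p0 h0
    have he1 : ((H.unfold).contraction).edge p0 a (p0 ++ r) :=
      (edge_c1 p0 _ a).mpr ⟨v, r, rfl, h0 ▸ hr⟩
    have hend : H.endV (p0 ++ r) = v := by
      rw [show H.endV (p0 ++ r) = endFrom (H.endV p0) r from endFrom_append ..,
        pathBA_endFrom hr]
    have h2 := ih (p0 ++ r) hend
    rw [List.append_assoc] at h2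
    exact Relation.ReflTransGen.head ⟨a, he1⟩ h2

theorem edge_iff {H : LGraph (A ⊕ B)}
    (huniq : ∀ (a : A) (u v : H.V) (p q : List ((A ⊕ B) × H.V)),
      H.PathBA a u v p → H.PathBA a u v q → p = q)
    {p q : List ((A ⊕ B) × H.V)}
    (hp : Blocks H H.root p) (hq : Blocks H H.root q) (a : A) :
    ((LGraph.unfold H).contraction).edge p a q ↔
      ((H.contraction).unfold).edge (contr p) a (contr q) := by
  constructor
  · intro h
    obtain ⟨w, blk, hqe, hblk⟩ := (edge_c1 p q a).mp h
    refine ⟨w, ?_, ?_⟩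
    · erw [hqe, contr_append, contr_block hblk]; rfl
    · show (H.contraction).edge ((H.contraction).endV (contr p)) a w
      rw [show (H.contraction).endV (contr p) = H.endV p from blocks_endFrom_contr hp H.root]
      exact pathBA_edge hblk
  · rintro ⟨w, hcq, he⟩
    have he' : (H.contraction).edge (H.endV p) a w := by
      rwa [show (H.contraction).endV (contr p) = H.endV p
        from blocks_endFrom_contr hp H.root] at he
    obtain ⟨blk, hblk⟩ := edge_pathBA he'
    have hb' : Blocks H H.root (p ++ blk) := blocks_append hp hblk
    have hqpb : q = p ++ blk :=
      blocks_inj huniq hq hb' (by erw [contr_append, contr_block hblk, hcq]; rfl)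
    rw [hqpb]
    exact (edge_c1 p _ a).mpr ⟨w, blk, rfl, hblk⟩

theorem reaches_blocks {H : LGraph (A ⊕ B)} {p : List ((A ⊕ B) × H.V)}
    (h : ((H.unfold).contraction).Reaches ([] : List ((A ⊕ B) × H.V)) p) :
    Blocks H H.root p := by
  induction h with
  | refl => exact Blocks.nil _
  | tail _ hstep ih =>
    obtain ⟨a, he⟩ := hstep
    obtain ⟨v, blk, rfl, hblk⟩ := (edge_c1 _ _ a).mp he
    exact blocks_append ih hblk

end CUAux

open CUAux in
/-- Contraction commutes with unfolding under a uniqueness condition: if `H`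
is a rooted graph labelled in `A ⊎ B` such that for every `a ∈ A` and any two
vertices `u`, `v` there is at most one path from `u` to `v` labelled by a
word in `B*a`, then the `B`-contraction of the unfolding of `H` is isomorphic
to the unfolding of the `B`-contraction of `H`. -/
theorem contraction_unfold_comm {A B : Type} (H : LGraph (A ⊕ B))
    (hroot : ∀ v, H.Reaches H.root v)
    (huniq : ∀ (a : A) (u v : H.V) (p q : List ((A ⊕ B) × H.V)),
      H.PathBA a u v p → H.PathBA a u v q → p = q) :
    LGraph.Isomorphic (LGraph.contraction (LGraph.unfold H))
      (LGraph.unfold (LGraph.contraction H)) := by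
  have blocksOf : ∀ x : (LGraph.contraction (LGraph.unfold H)).Rt, Blocks H H.root x.1 :=
    fun x => reaches_blocks x.2
  let f : (LGraph.contraction (LGraph.unfold H)).Rt → (LGraph.unfold (LGraph.contraction H)).Rt :=
    fun x => ⟨contr x.1,
      (reaches_unfold (H.contraction) (contr x.1)).mpr (blocks_path (blocksOf x))⟩
  have hbij : Function.Bijective f := by
    constructor
    · intro x y hxy
      apply Subtype.ext
      exact blocks_inj huniq (blocksOf x) (blocksOf y) (congrArg Subtype.val hxy)
    · rintro ⟨m, hm⟩
      obtain ⟨p, hb, hc⟩ := blocks_surj ((reaches_unfold (H.contraction) m).mp hm)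
      have hr : (LGraph.contraction (LGraph.unfold H)).Reaches
          (LGraph.contraction (LGraph.unfold H)).root p := by
        have := blocks_reaches hb ([] : List ((A ⊕ B) × H.V)) rfl
        rw [List.nil_append] at this; exact this
      exact ⟨⟨p, hr⟩, Subtype.ext hc⟩
  refine ⟨⟨Equiv.ofBijective f hbij, rfl, ?_⟩⟩
  intro u v a
  exact edge_iff huniq (blocksOf u) (blocksOf v) a
end

section
/- For any graph G labelled in A ⊎ B with root r, the B-contraction of the unfolding Unf(G,r) is bisimilar to the unfolding from r of the B-contraction of G (even though they need not be isomorphic). -/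
open LGraph

namespace LGraph

lemma endV_append_single {L : Type} (G : LGraph L) (p : List (L × G.V)) (l : L) (v : G.V) :
    G.endV (p ++ [(l, v)]) = v := by
  simp [endV, List.foldl_append]

lemma bstar_unfold_to_base {A B : Type} (G : LGraph (A ⊕ B))
    {p w : List ((A ⊕ B) × G.V)} (h : (G.unfold).BStar p w) :
    G.BStar (G.endV p) (G.endV w) := by
  induction h with
  | refl => exact Relation.ReflTransGen.refl
  | tail _ hstep ih =>
    obtain ⟨b, v, rfl, he⟩ := hstep
    rw [endV_append_single]
    exact ih.tail ⟨b, he⟩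

lemma bstar_base_to_unfold {A B : Type} (G : LGraph (A ⊕ B))
    {x w : G.V} (h : G.BStar x w) :
    ∀ p : List ((A ⊕ B) × G.V), G.endV p = x →
      ∃ P : List ((A ⊕ B) × G.V), (G.unfold).BStar p P ∧ G.endV P = w := by
  induction h with
  | refl => exact fun p hp => ⟨p, Relation.ReflTransGen.refl, hp⟩
  | tail _ hstep ih =>
    intro p hp
    obtain ⟨b, hb⟩ := hstep
    obtain ⟨P, hP, hPe⟩ := ih p hp
    refine ⟨P ++ [(Sum.inr b, _)], hP.tail ⟨b, _, rfl, by rw [hPe]; exact hb⟩,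
      endV_append_single _ _ _ _⟩

end LGraph

/-- For any rooted graph `G` labelled in `A ⊎ B`, the `B`-contraction of the
unfolding of `G` is bisimilar to the unfolding of the `B`-contraction of `G`
(even though they need not be isomorphic). -/
theorem contraction_unfold_bisimilar {A B : Type} (G : LGraph (A ⊕ B))
    (hroot : ∀ v, G.Reaches G.root v) :
    LGraph.Bisimilar (LGraph.contraction (LGraph.unfold G))
      (LGraph.unfold (LGraph.contraction G)) := by
  refine ⟨fun p q => G.endV p = (G.contraction).endV q, rfl, ?_, ?_⟩
  · rintro (p : List ((A ⊕ B) × G.V)) (q : List (A × G.V)) hpq a p' ⟨w, hbs, v, rfl, he⟩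
    refine ⟨(q ++ [(a, v)] : List (A × G.V)), ⟨v, rfl, G.endV w, ?_, he⟩, ?_⟩
    · rw [← hpq]; exact G.bstar_unfold_to_base hbs
    · show G.endV _ = (G.contraction).endV _
      exact (endV_append_single G (w : List ((A ⊕ B) × G.V)) _ v).trans
        (endV_append_single G.contraction q a v).symm
  · rintro (p : List ((A ⊕ B) × G.V)) (q : List (A × G.V)) hpq a q' ⟨v, rfl, w, hbs, he⟩
    obtain ⟨P, hP, hPe⟩ := G.bstar_base_to_unfold hbs p hpq
    refine ⟨(P ++ [((Sum.inl a : A ⊕ B), show G.V from v)] : List ((A ⊕ B) × G.V)),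
      ⟨P, hP, v, rfl, by rw [hPe]; exact he⟩, ?_⟩
    show G.endV _ = (G.contraction).endV _
    exact (endV_append_single G P _ v).trans
      (endV_append_single G.contraction q a v).symm
end
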